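/- For all real numbers w₁, w₂ with 0 ≤ w₁ ≤ w₂ ≤ 2, min(1.7901428 − 0.0803363·w₁ + 0.1078559·w₂, 3.3009719 + 0.7181409·w₁ − 0.7466741·w₂) ≤ 1.99058. -/
import Mathlib

/-- For all `0 ≤ w₁ ≤ w₂ ≤ 2`, the minimum of the two affine bounds from the
two-window argument is at most `1.99058`. -/
theorem min_affine_bounds_le (w₁ w₂ : ℝ) (h0 : 0 ≤ w₁) (h12 : w₁ ≤ w₂) (h2 : w₂ ≤ 2) :
    min (1.7901428 - 0.0803363 * w₁ + 0.1078559 * w₂)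
        (3.3009719 + 0.7181409 * w₁ - 0.7466741 * w₂) ≤ 1.99058 := by
  by_contra h
  push_neg at h
  rw [lt_min_iff] at h
  obtain ⟨h1, h2'⟩ := h
  linarith
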